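/- Fix ρ₀ > 0, set t̄ := πρ₀²/4, and define for t ∈ [0, t̄) the angle θ(t) := 2t/ρ₀², the radius ρ(t) := ρ₀ (1 − sin(2t/ρ₀²))^{1/2}, the shift z(t) := ∫₀ᵗ ρ(τ)⁻¹ sin(2τ/ρ₀²) dτ, and the family γ(t,u) := (ρ(t) cos u, ρ(t) sin u, z(t)). Then γ solves the framed curvature flow with angle function θ on [0,t̄), ρ(t) → 0 as t → t̄, and z(t) → +∞ as t → t̄ (the integral ∫₀^{t̄} ρ(τ)⁻¹ sin(2τ/ρ₀²) dτ diverges); i.e. the flow develops an infinite pinch singularity. -/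

import Mathlib

noncomputable section

open Real MeasureTheory
open scoped RealInnerProductSpace

/-- Euclidean 3-space. -/
abbrev E3 : Type := EuclideanSpace ℝ (Fin 3)

/-- The cross product in `ℝ³`. -/
def cross (a b : E3) : E3 :=
  WithLp.toLp 2 ![a 1 * b 2 - a 2 * b 1, a 2 * b 0 - a 0 * b 2, a 0 * b 1 - a 1 * b 0]

/-- Partial derivative in the first (time) variable, vector valued. -/
def pt (f : ℝ → ℝ → E3) (t u : ℝ) : E3 := deriv (fun t' => f t' u) t

/-- Partial derivative in the second (space) variable, vector valued. -/
def pu (f : ℝ → ℝ → E3) (t u : ℝ) : E3 := deriv (fun u' => f t u') u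

/-- Partial derivative in the first (time) variable, scalar valued. -/
def ptR (f : ℝ → ℝ → ℝ) (t u : ℝ) : ℝ := deriv (fun t' => f t' u) t

/-- Partial derivative in the second (space) variable, scalar valued. -/
def puR (f : ℝ → ℝ → ℝ) (t u : ℝ) : ℝ := deriv (fun u' => f t u') u

/-- The local rate of parametrization `g := ‖∂ᵤ γ‖`. -/
def pg (γ : ℝ → ℝ → E3) (t u : ℝ) : ℝ := ‖pu γ t u‖

/-- Arclength derivative `∂ₛ := g⁻¹ ∂ᵤ` of a vector field along `γ`. -/
def ds (γ f : ℝ → ℝ → E3) (t u : ℝ) : E3 := (pg γ t u)⁻¹ • pu f t u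

/-- Arclength derivative `∂ₛ := g⁻¹ ∂ᵤ` of a scalar field along `γ`. -/
def dsR (γ : ℝ → ℝ → E3) (f : ℝ → ℝ → ℝ) (t u : ℝ) : ℝ := (pg γ t u)⁻¹ * puR f t u

/-- The unit tangent `T := ∂ₛ γ`. -/
def tang (γ : ℝ → ℝ → E3) : ℝ → ℝ → E3 := ds γ γ

/-- The curvature `κ := ‖∂ₛ² γ‖`. -/
def curv (γ : ℝ → ℝ → E3) (t u : ℝ) : ℝ := ‖ds γ (tang γ) t u‖

/-- The Frenet normal `N := κ⁻¹ ∂ₛ² γ`. -/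
def fN (γ : ℝ → ℝ → E3) (t u : ℝ) : E3 := (curv γ t u)⁻¹ • ds γ (tang γ) t u

/-- The Frenet binormal `B := T × N`. -/
def fB (γ : ℝ → ℝ → E3) (t u : ℝ) : E3 := cross (tang γ t u) (fN γ t u)

/-- The torsion `τ := ⟨∂ₛ N, B⟩`. -/
def tors (γ : ℝ → ℝ → E3) (t u : ℝ) : ℝ := ⟪ds γ (fN γ) t u, fB γ t u⟫

/-- The velocity `cos θ ∂ₛ²γ + sin θ (∂ₛγ × ∂ₛ²γ)` of the framed curvature flow. -/
def fcfVel (γ : ℝ → ℝ → E3) (θ : ℝ → ℝ → ℝ) (t u : ℝ) : E3 :=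
  Real.cos (θ t u) • ds γ (tang γ) t u +
    Real.sin (θ t u) • cross (tang γ t u) (ds γ (tang γ) t u)

/-- The length `L(Γ_t) := ∫₀^{2π} g du`. -/
def len (γ : ℝ → ℝ → E3) (t : ℝ) : ℝ := ∫ u in (0:ℝ)..(2 * π), pg γ t u

/-- Infinite pinch singularity: with `θ(t) = 2t/ρ₀²`,
`ρ(t) = ρ₀ (1 − sin(2t/ρ₀²))^{1/2}`, `z(t) = ∫₀ᵗ ρ(τ)⁻¹ sin(2τ/ρ₀²) dτ`, the
family `γ(t,u) = (ρ(t) cos u, ρ(t) sin u, z(t))` solves the framed curvature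
flow on `[0, t̄)`, `t̄ = πρ₀²/4`, the radius tends to `0`, and the shift `z(t)`
diverges to `+∞` as `t → t̄`. -/
lemma hasDerivAt_e3 {f₀ f₁ f₂ : ℝ → ℝ} {a₀ a₁ a₂ : ℝ} {x : ℝ}
    (h₀ : HasDerivAt f₀ a₀ x) (h₁ : HasDerivAt f₁ a₁ x) (h₂ : HasDerivAt f₂ a₂ x) :
    HasDerivAt (𝕜 := ℝ) (F := E3) (fun y => WithLp.toLp 2 ![f₀ y, f₁ y, f₂ y]) (WithLp.toLp 2 ![a₀, a₁, a₂]) x := by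
  have h : HasDerivAt (fun y => (![f₀ y, f₁ y, f₂ y] : Fin 3 → ℝ)) ![a₀, a₁, a₂] x := by
    rw [hasDerivAt_pi]
    intro i
    fin_cases i <;> simpa
  exact ((EuclideanSpace.equiv (Fin 3) ℝ).symm.toContinuousLinearMap.hasFDerivAt.comp_hasDerivAt x h)

set_option maxHeartbeats 2000000 in
theorem framed_curvature_flow_infinite_pinch_singularity
    (ρ₀ : ℝ) (hρ₀ : 0 < ρ₀)
    (tend : ℝ) (htend : tend = π * ρ₀ ^ 2 / 4)
    (ρ z : ℝ → ℝ)
    (hρ : ∀ t, ρ t = ρ₀ * Real.sqrt (1 - Real.sin (2 * t / ρ₀ ^ 2)))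
    (hz : ∀ t, z t = ∫ τ in (0:ℝ)..t, (ρ τ)⁻¹ * Real.sin (2 * τ / ρ₀ ^ 2))
    (γ : ℝ → ℝ → E3)
    (hγ : ∀ t u, γ t u = ![ρ t * Real.cos u, ρ t * Real.sin u, z t]) :
    (∀ t ∈ Set.Ico (0:ℝ) tend, ∀ u,
        pt γ t u = fcfVel γ (fun t' _ => 2 * t' / ρ₀ ^ 2) t u) ∧
    Filter.Tendsto ρ (nhdsWithin tend (Set.Iio tend)) (nhds 0) ∧
    Filter.Tendsto z (nhdsWithin tend (Set.Iio tend)) Filter.atTop := by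
  have hρ₀2 : (0:ℝ) < ρ₀ ^ 2 := by positivity
  have htpos : 0 < tend := by rw [htend]; positivity
  have hρc : Continuous ρ := by rw [funext hρ]; fun_prop
  have hsin1 : ∀ τ ∈ Set.Ioo (-tend) tend, Real.sin (2 * τ / ρ₀ ^ 2) < 1 := by
    intro τ hτ
    have h1 : 2 * τ / ρ₀ ^ 2 < π / 2 := by
      rw [div_lt_iff₀ hρ₀2]; rw [htend] at hτ; nlinarith [hτ.2]
    have h2 : -(π/2) ≤ 2 * τ / ρ₀ ^ 2 := by
      rw [le_div_iff₀ hρ₀2]; rw [htend] at hτ; nlinarith [hτ.1]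
    calc Real.sin (2 * τ / ρ₀ ^ 2) < Real.sin (π/2) := by
          apply Real.strictMonoOn_sin ⟨h2, le_of_lt h1⟩ ⟨by linarith [Real.pi_pos], le_refl _⟩ h1
      _ = 1 := Real.sin_pi_div_two
  have hρpos : ∀ τ ∈ Set.Ioo (-tend) tend, 0 < ρ τ := by
    intro τ hτ
    rw [hρ]
    exact mul_pos hρ₀ (Real.sqrt_pos.mpr (by linarith [hsin1 τ hτ]))
  have hfc : ContinuousOn (fun τ => (ρ τ)⁻¹ * Real.sin (2 * τ / ρ₀ ^ 2))
      (Set.Ioo (-tend) tend) :=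
    ((hρc.continuousOn.inv₀ (fun τ hτ => ne_of_gt (hρpos τ hτ))).mul
      (Real.continuous_sin.comp (by fun_prop)).continuousOn)
  have hρnn : ∀ t, 0 ≤ ρ t := fun t => by rw [hρ]; positivity
  have hγ' : ∀ t u, γ t u = WithLp.toLp 2 ![ρ t * Real.cos u, ρ t * Real.sin u, z t] :=
    fun t u => by rw [← hγ t u]
  refine ⟨?_, ?_, ?_⟩
  -- Part 1: the PDE
  · -- spatial derivative
    have hpu : ∀ t u, pu γ t u = (WithLp.toLp 2 ![ρ t * -Real.sin u, ρ t * Real.cos u, 0] : E3) := by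
      intro t u
      have h := hasDerivAt_e3 ((Real.hasDerivAt_cos u).const_mul (ρ t))
        ((Real.hasDerivAt_sin u).const_mul (ρ t)) (hasDerivAt_const u (z t))
      unfold pu
      simp only [hγ']
      exact h.deriv
    have hpg : ∀ t u, pg γ t u = ρ t := by
      intro t u
      unfold pg
      rw [hpu, EuclideanSpace.norm_eq]
      simp [Fin.sum_univ_three, Real.norm_eq_abs, sq_abs]
      rw [show (ρ t * Real.sin u)^2 + (ρ t * Real.cos u)^2 = (ρ t)^2 by
        nlinarith [Real.sin_sq_add_cos_sq u]]
      exact Real.sqrt_sq (hρnn t)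
    -- fix t
    rintro t ⟨ht0, ht1⟩ u
    have htmem : t ∈ Set.Ioo (-tend) tend := ⟨by linarith, ht1⟩
    have hrt : 0 < ρ t := hρpos t htmem
    set θ := 2 * t / ρ₀ ^ 2 with hθ
    -- tangent
    have htang : ∀ u', tang γ t u' = (WithLp.toLp 2 ![-Real.sin u', Real.cos u', 0] : E3) := by
      intro u'
      unfold tang ds
      rw [hpg, hpu]
      refine PiLp.ext fun i => ?_
      fin_cases i <;> simp [PiLp.smul_apply] <;> field_simp
    have hputang : pu (tang γ) t u = (WithLp.toLp 2 ![-Real.cos u, -Real.sin u, 0] : E3) := by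
      unfold pu
      simp only [htang]
      exact (hasDerivAt_e3 (Real.hasDerivAt_sin u).neg (Real.hasDerivAt_cos u)
        (hasDerivAt_const u 0)).deriv
    have hdstang : ds γ (tang γ) t u = (ρ t)⁻¹ • (WithLp.toLp 2 ![-Real.cos u, -Real.sin u, 0] : E3) := by
      unfold ds; rw [hpg, hputang]
    -- time derivative of ρ
    have hsq : Real.sqrt (1 - Real.sin θ) ≠ 0 :=
      ne_of_gt (Real.sqrt_pos.mpr (by linarith [hsin1 t htmem]))
    have hρ' : HasDerivAt ρ (-Real.cos θ / ρ t) t := by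
      have hin : HasDerivAt (fun x : ℝ => 2 * x / ρ₀ ^ 2) (2 / ρ₀ ^ 2) t := by
        simpa using (((hasDerivAt_id t).const_mul 2).div_const (ρ₀ ^ 2))
      have hsin : HasDerivAt (fun x : ℝ => 1 - Real.sin (2 * x / ρ₀ ^ 2))
          (-(Real.cos θ * (2 / ρ₀ ^ 2))) t := by
        simpa using (((Real.hasDerivAt_sin θ).comp t hin).const_sub 1)
      have hs : HasDerivAt (fun x : ℝ => ρ₀ * Real.sqrt (1 - Real.sin (2 * x / ρ₀ ^ 2)))
          (ρ₀ * (1 / (2 * Real.sqrt (1 - Real.sin θ)) * -(Real.cos θ * (2 / ρ₀ ^ 2)))) t := by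
        exact (((Real.hasDerivAt_sqrt (by
          have := hsin1 t htmem; intro hc; rw [sub_eq_zero] at hc; exact absurd hc.symm (ne_of_lt this))).comp
            t hsin).const_mul ρ₀)
      have heq : ρ = fun x : ℝ => ρ₀ * Real.sqrt (1 - Real.sin (2 * x / ρ₀ ^ 2)) := funext hρ
      have hval : -Real.cos θ / ρ t
          = ρ₀ * (1 / (2 * Real.sqrt (1 - Real.sin θ)) * -(Real.cos θ * (2 / ρ₀ ^ 2))) := by
        rw [hρ t, ← hθ]
        field_simp
      rw [hval, heq]
      exact hs
    -- time derivative of z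
    have hfc : ContinuousOn (fun τ => (ρ τ)⁻¹ * Real.sin (2 * τ / ρ₀ ^ 2)) (Set.Ioo (-tend) tend) := by
      have hρc : Continuous ρ := by
        rw [funext hρ]; fun_prop
      exact ((hρc.continuousOn.inv₀ (fun τ hτ => ne_of_gt (hρpos τ hτ))).mul
        (Real.continuous_sin.comp (by fun_prop)).continuousOn)
    have hz' : HasDerivAt z ((ρ t)⁻¹ * Real.sin θ) t := by
      have hsub : Set.uIcc (0:ℝ) t ⊆ Set.Ioo (-tend) tend := by
        rw [Set.uIcc_of_le ht0]
        intro x hx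
        exact ⟨by linarith [hx.1], lt_of_le_of_lt hx.2 ht1⟩
      have hint : IntervalIntegrable (fun τ => (ρ τ)⁻¹ * Real.sin (2 * τ / ρ₀ ^ 2)) volume 0 t :=
        (hfc.mono hsub).intervalIntegrable
      have hmeas := hfc.stronglyMeasurableAtFilter (μ := volume) isOpen_Ioo t htmem
      have hca : ContinuousAt (fun τ => (ρ τ)⁻¹ * Real.sin (2 * τ / ρ₀ ^ 2)) t :=
        hfc.continuousAt (isOpen_Ioo.mem_nhds htmem)
      have := intervalIntegral.integral_hasDerivAt_right hint hmeas hca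
      rw [funext hz]
      exact this
    -- time derivative of γ
    have hpt : pt γ t u = (WithLp.toLp 2 ![(-Real.cos θ / ρ t) * Real.cos u, (-Real.cos θ / ρ t) * Real.sin u,
        (ρ t)⁻¹ * Real.sin θ] : E3) := by
      unfold pt
      simp only [hγ']
      exact (hasDerivAt_e3 (hρ'.mul_const (Real.cos u)) (hρ'.mul_const (Real.sin u)) hz').deriv
    -- assemble
    rw [hpt]
    unfold fcfVel
    rw [hdstang, htang]
    refine PiLp.ext fun i => ?_
    fin_cases i
    · simp [cross, PiLp.add_apply, PiLp.smul_apply, smul_eq_mul]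
      rw [hθ]; ring
    · simp [cross, PiLp.add_apply, PiLp.smul_apply, smul_eq_mul]
      rw [hθ]; ring
    · simp [cross, PiLp.add_apply, PiLp.smul_apply, smul_eq_mul]
      rw [hθ]; linear_combination (-((ρ t)⁻¹ * Real.sin (2*t/ρ₀^2))) * Real.sin_sq_add_cos_sq u
  · have hρtend : ρ tend = 0 := by
      rw [hρ, show 2 * tend / ρ₀ ^ 2 = π / 2 by rw [htend]; field_simp; ring]
      simp
    have h : Filter.Tendsto ρ (nhdsWithin tend (Set.Iio tend)) (nhds (ρ tend)) :=
      (hρc.tendsto tend).mono_left nhdsWithin_le_nhds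
    rwa [hρtend] at h
  · set f := fun τ => (ρ τ)⁻¹ * Real.sin (2 * τ / ρ₀ ^ 2) with hf
    set t₁ := tend / 2 with ht₁
    have ht₁mem : t₁ ∈ Set.Ioo (-tend) tend := by constructor <;> simp [ht₁] <;> linarith
    -- pointwise lower bound on f
    have hlow : ∀ τ ∈ Set.Ico t₁ tend, ρ₀ / (2 * (tend - τ)) ≤ f τ := by
      intro τ hτ
      have h3 : 0 < tend - τ := by linarith [hτ.2]
      have hτmem : τ ∈ Set.Ioo (-tend) tend := ⟨by simp [ht₁] at hτ; linarith [hτ.1], hτ.2⟩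
      set θ := 2 * τ / ρ₀ ^ 2 with hθ
      have hθ1 : π / 4 ≤ θ := by
        rw [hθ, le_div_iff₀ hρ₀2]
        have := hτ.1; rw [ht₁, htend] at this; nlinarith
      have hθ2 : θ < π / 2 := by
        rw [hθ, div_lt_iff₀ hρ₀2]
        have := hτ.2; rw [htend] at this; nlinarith
      have hpi : (0:ℝ) < π := Real.pi_pos
      have h1 : Real.sqrt 2 / 2 ≤ Real.sin θ := by
        rw [← Real.sin_pi_div_four]
        exact Real.strictMonoOn_sin.monotoneOn ⟨by linarith, by linarith⟩
          ⟨by linarith, by linarith⟩ hθ1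
      have hsinlt : Real.sin θ < 1 := hsin1 τ hτmem
      have hquad : 1 - Real.sin θ ≤ (π/2 - θ)^2 / 2 := by
        have := Real.one_sub_sq_div_two_le_cos (x := π/2 - θ)
        rw [Real.cos_pi_div_two_sub] at this
        linarith
      have hsqrt : Real.sqrt (1 - Real.sin θ) ≤ (π/2 - θ) / Real.sqrt 2 := by
        refine (Real.sqrt_le_sqrt hquad).trans_eq ?_
        rw [show (π/2-θ)^2/2 = ((π/2-θ)/Real.sqrt 2)^2 by
          rw [div_pow, Real.sq_sqrt (by norm_num : (0:ℝ) ≤ 2)]]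
        exact Real.sqrt_sq (div_nonneg (by linarith) (Real.sqrt_nonneg 2))
      have hrle : ρ τ ≤ Real.sqrt 2 * (tend - τ) / ρ₀ := by
        rw [hρ]
        have : π/2 - θ = 2 * (tend - τ) / ρ₀ ^ 2 := by
          rw [hθ, htend]; field_simp; ring
        calc ρ₀ * Real.sqrt (1 - Real.sin θ) ≤ ρ₀ * ((π/2 - θ)/Real.sqrt 2) := by
              exact mul_le_mul_of_nonneg_left hsqrt (le_of_lt hρ₀)
          _ = ρ₀ * (2 * (tend - τ) / ρ₀ ^ 2 / Real.sqrt 2) := by rw [this]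
          _ = Real.sqrt 2 * (tend - τ) / ρ₀ := by
              have h2 : Real.sqrt 2 * Real.sqrt 2 = 2 := Real.mul_self_sqrt (by norm_num)
              have hs2 : Real.sqrt 2 ≠ 0 := by positivity
              field_simp
              linear_combination -h2
      have hrpos : 0 < ρ τ := hρpos τ hτmem
      have hbpos : 0 < Real.sqrt 2 * (tend - τ) / ρ₀ := by positivity
      have key : ρ₀ / (2 * (tend - τ)) = (Real.sqrt 2 / 2) / (Real.sqrt 2 * (tend - τ) / ρ₀) := by
        rw [div_eq_div_iff (by positivity) (by positivity)]
        have h2 : Real.sqrt 2 * Real.sqrt 2 = 2 := Real.mul_self_sqrt (by norm_num)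
        field_simp
      calc ρ₀ / (2 * (tend - τ)) = (Real.sqrt 2 / 2) / (Real.sqrt 2 * (tend - τ) / ρ₀) := key
        _ ≤ (Real.sqrt 2 / 2) / ρ τ := by gcongr
        _ ≤ Real.sin θ / ρ τ := by gcongr
        _ = f τ := by rw [hf]; rw [div_eq_inv_mul]
    -- integral lower bound
    have hzlb : ∀ t ∈ Set.Ioo t₁ tend,
        z t₁ + (ρ₀/2 * Real.log (tend - t₁) - ρ₀/2 * Real.log (tend - t)) ≤ z t := by
      intro t ht
      have hsub1 : Set.uIcc (0:ℝ) t₁ ⊆ Set.Ioo (-tend) tend := by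
        rw [Set.uIcc_of_le (by linarith : (0:ℝ) ≤ t₁)]
        intro x hx; exact ⟨by linarith [hx.1], lt_of_le_of_lt hx.2 ht₁mem.2⟩
      have hsub2 : Set.uIcc t₁ t ⊆ Set.Ioo (-tend) tend := by
        rw [Set.uIcc_of_le (le_of_lt ht.1)]
        intro x hx
        exact ⟨by have := hx.1; have := ht₁mem.1; simp [ht₁] at *; linarith,
          lt_of_le_of_lt hx.2 ht.2⟩
      have hint1 : IntervalIntegrable f volume 0 t₁ := (hfc.mono hsub1).intervalIntegrable
      have hint2 : IntervalIntegrable f volume t₁ t := (hfc.mono hsub2).intervalIntegrable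
      have hsplit : z t = z t₁ + ∫ τ in t₁..t, f τ := by
        rw [hz, hz, ← intervalIntegral.integral_add_adjacent_intervals hint1 hint2]
      have hFd : ∀ τ ∈ Set.uIcc t₁ t,
          HasDerivAt (fun x => -(ρ₀/2) * Real.log (tend - x)) (ρ₀ / (2*(tend - τ))) τ := by
        intro τ hτ
        rw [Set.uIcc_of_le (le_of_lt ht.1)] at hτ
        have h3 : 0 < tend - τ := by linarith [hτ.2, ht.2]
        have hs : HasDerivAt (fun x : ℝ => tend - x) (-1) τ := (hasDerivAt_id τ).const_sub tend
        have hl := ((Real.hasDerivAt_log (ne_of_gt h3)).comp τ hs).const_mul (-(ρ₀/2))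
        simp only [Function.comp] at hl
        exact hl.congr_deriv (by field_simp [ne_of_gt h3])
      have hgcont : ContinuousOn (fun τ => ρ₀ / (2*(tend - τ))) (Set.uIcc t₁ t) := by
        apply ContinuousOn.div continuousOn_const (by fun_prop)
        intro x hx
        rw [Set.uIcc_of_le (le_of_lt ht.1)] at hx
        have h3 : 0 < tend - x := by linarith [hx.2, ht.2]
        positivity
      have hintg : IntervalIntegrable (fun τ => ρ₀ / (2*(tend - τ))) volume t₁ t :=
        hgcont.intervalIntegrable
      have heval : (∫ τ in t₁..t, ρ₀ / (2*(tend - τ)))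
          = ρ₀/2 * Real.log (tend - t₁) - ρ₀/2 * Real.log (tend - t) := by
        rw [intervalIntegral.integral_eq_sub_of_hasDerivAt hFd hintg]
        ring
      have hmono : (∫ τ in t₁..t, ρ₀ / (2*(tend - τ))) ≤ ∫ τ in t₁..t, f τ := by
        apply intervalIntegral.integral_mono_on (le_of_lt ht.1) hintg hint2
        intro x hx
        exact hlow x ⟨hx.1, lt_of_le_of_lt hx.2 ht.2⟩
      rw [hsplit]
      have := heval ▸ hmono
      linarith
    -- blow up of the lower bound
    have h0 : Filter.Tendsto (fun t => tend - t) (nhdsWithin tend (Set.Iio tend))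
        (nhdsWithin 0 (Set.Ioi 0)) := by
      rw [tendsto_nhdsWithin_iff]
      constructor
      · have h : Filter.Tendsto (fun t : ℝ => tend - t) (nhds tend) (nhds (tend - tend)) :=
          (continuous_const.sub continuous_id).tendsto tend
        simpa using h.mono_left nhdsWithin_le_nhds
      · exact eventually_mem_nhdsWithin.mono (fun x hx => by
          simp only [Set.mem_Iio] at hx; simp only [Set.mem_Ioi]; linarith)
    have hlogatbot : Filter.Tendsto (fun t => Real.log (tend - t))
        (nhdsWithin tend (Set.Iio tend)) Filter.atBot :=
      Real.tendsto_log_nhdsGT_zero.comp h0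
    have htop : Filter.Tendsto (fun t => -(ρ₀/2 * Real.log (tend - t)))
        (nhdsWithin tend (Set.Iio tend)) Filter.atTop := by
      have h1 : Filter.Tendsto (fun t => ρ₀/2 * Real.log (tend - t))
          (nhdsWithin tend (Set.Iio tend)) Filter.atBot :=
        Filter.Tendsto.const_mul_atBot (by positivity) hlogatbot
      exact Filter.tendsto_neg_atBot_atTop.comp h1
    have hblow : Filter.Tendsto
        (fun t => z t₁ + (ρ₀/2 * Real.log (tend - t₁) - ρ₀/2 * Real.log (tend - t)))
        (nhdsWithin tend (Set.Iio tend)) Filter.atTop := by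
      have h2 := Filter.tendsto_atTop_add_const_left _
        (z t₁ + ρ₀/2 * Real.log (tend - t₁)) htop
      exact h2.congr (fun x => by ring)
    refine Filter.tendsto_atTop_mono' _ ?_ hblow
    filter_upwards [Ioo_mem_nhdsLT_of_mem (⟨by linarith, le_refl tend⟩ : tend ∈ Set.Ioc t₁ tend)]
      with t ht using hzlb t ht
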